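/- For every integer n ≥ 6, the characteristic polynomial of A(K_n,U_2^−) satisfies det(λI − A(K_n,U_2^−)) = (λ+1)^{n−5}(λ−1)²(λ+3)(λ² + (4−n)λ + 11 − 3n). -/

import Mathlib

open Matrix

/-- The signed-complete-graph matrix `A(K_n, H^-)`: zero diagonal, `-1` on edges of `H`
(vertices labelled `1, …, n`, index `i : Fin n` corresponds to label `i+1`), `+1` otherwise. -/
noncomputable def signMat (n : ℕ) (E : ℕ → ℕ → Prop) : Matrix (Fin n) (Fin n) ℝ :=
  open scoped Classical in
  Matrix.of fun i j => if i = j then 0 else if E ((i : ℕ) + 1) ((j : ℕ) + 1) then -1 else 1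

/-- The largest eigenvalue of a real matrix (the supremum of its spectrum). -/
noncomputable def lam1 {n : ℕ} (M : Matrix (Fin n) (Fin n) ℝ) : ℝ :=
  sSup (spectrum ℝ M)

/-- `{i, j} = {a, b}` as an (unordered) edge. -/
def adjPair (a b i j : ℕ) : Prop := (i = a ∧ j = b) ∨ (i = b ∧ j = a)

/-- `U₁`: triangle `1 2 3` together with the pendant edges `{1, i}` for `4 ≤ i ≤ n`;
i.e. vertex `1` is adjacent to every other vertex, plus the edge `{2,3}`. -/
def U1edge (i j : ℕ) : Prop :=
  (i = 1 ∧ 2 ≤ j) ∨ (j = 1 ∧ 2 ≤ i) ∨ adjPair 2 3 i j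

/-- `D_{1,n-3}`: edges `{1,2}`, `{2,3}` and `{3,i}` for `4 ≤ i ≤ n`. -/
def Dedge (i j : ℕ) : Prop :=
  adjPair 1 2 i j ∨ adjPair 2 3 i j ∨ (i = 3 ∧ 4 ≤ j) ∨ (j = 3 ∧ 4 ≤ i)

/-- `U₂`: triangles `1 2 3` and `1 4 5` sharing vertex `1`, plus pendant edges `{1,i}`
for `6 ≤ i ≤ n`; i.e. vertex `1` adjacent to all, plus edges `{2,3}` and `{4,5}`. -/
def U2edge (i j : ℕ) : Prop :=
  (i = 1 ∧ 2 ≤ j) ∨ (j = 1 ∧ 2 ≤ i) ∨ adjPair 2 3 i j ∨ adjPair 4 5 i j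

/-- `H₁(s,t)` on `n = s + t + 4` vertices: triangle `1 2 3`, `s` pendant vertices
`5, …, s+4` at vertex `1`, vertex `4` adjacent to `1`, and `t` pendant vertices
`s+5, …, s+t+4` at vertex `4`. -/
def H1edge (s t : ℕ) (i j : ℕ) : Prop :=
  adjPair 1 2 i j ∨ adjPair 1 3 i j ∨ adjPair 2 3 i j ∨ adjPair 1 4 i j ∨
  (i = 1 ∧ 5 ≤ j ∧ j ≤ s + 4) ∨ (j = 1 ∧ 5 ≤ i ∧ i ≤ s + 4) ∨
  (i = 4 ∧ s + 5 ≤ j ∧ j ≤ s + t + 4) ∨ (j = 4 ∧ s + 5 ≤ i ∧ i ≤ s + t + 4)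

/-- `H₂(s,t)` on `n = s + t + 5` vertices: triangle `1 2 3`, edges `{1,4}` and `{4,5}`,
`s` pendant vertices `6, …, s+5` at vertex `4`, and `t` pendant vertices
`s+6, …, s+t+5` at vertex `5`. -/
def H2edge (s t : ℕ) (i j : ℕ) : Prop :=
  adjPair 1 2 i j ∨ adjPair 1 3 i j ∨ adjPair 2 3 i j ∨ adjPair 1 4 i j ∨ adjPair 4 5 i j ∨
  (i = 4 ∧ 6 ≤ j ∧ j ≤ s + 5) ∨ (j = 4 ∧ 6 ≤ i ∧ i ≤ s + 5) ∨
  (i = 5 ∧ s + 6 ≤ j ∧ j ≤ s + t + 5) ∨ (j = 5 ∧ s + 6 ≤ i ∧ i ≤ s + t + 5)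

/-- `K_{1,s} ∪ t·P₂` on `n = s + 1 + 2t` vertices: star with center `1` and leaves
`2, …, s+1`, together with the `t` disjoint edges `{s+2k+2, s+2k+3}`, `0 ≤ k < t`. -/
def starMatchEdge (s t : ℕ) (i j : ℕ) : Prop :=
  (i = 1 ∧ 2 ≤ j ∧ j ≤ s + 1) ∨ (j = 1 ∧ 2 ≤ i ∧ i ≤ s + 1) ∨
  (∃ k, k < t ∧ adjPair (s + 2 * k + 2) (s + 2 * k + 3) i j)

/-- The quotient matrix `Q₃(s,t)`. -/
noncomputable def Q3 (s t : ℕ) : Matrix (Fin 6) (Fin 6) ℝ :=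
  !![0, -1, -1, -1, -(s : ℝ), (t : ℝ);
     -1, 0, -1, 1, (s : ℝ), (t : ℝ);
     -1, -1, 0, 1, (s : ℝ), (t : ℝ);
     -1, 1, 1, 0, (s : ℝ), -(t : ℝ);
     -1, 1, 1, 1, (s : ℝ) - 1, (t : ℝ);
     1, 1, 1, -1, (s : ℝ), (t : ℝ) - 1]

/-- The quotient matrix `Q₄(s,t)`. -/
noncomputable def Q4 (s t : ℕ) : Matrix (Fin 7) (Fin 7) ℝ :=
  !![0, -1, -1, -1, 1, (s : ℝ), (t : ℝ);
     -1, 0, -1, 1, 1, (s : ℝ), (t : ℝ);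
     -1, -1, 0, 1, 1, (s : ℝ), (t : ℝ);
     -1, 1, 1, 0, -1, -(s : ℝ), (t : ℝ);
     1, 1, 1, -1, 0, (s : ℝ), -(t : ℝ);
     1, 1, 1, -1, 1, (s : ℝ) - 1, (t : ℝ);
     1, 1, 1, 1, -1, (s : ℝ), (t : ℝ) - 1]

namespace U2aux


noncomputable def eps (m p : ℕ) : ℝ := if m = p then 1 else 0

lemma sum_eps {n p : ℕ} (hp : p < n) : ∑ i : Fin n, eps (↑i) p = 1 := by
  have h : ∀ i : Fin n, eps (↑i) p = if i = ⟨p, hp⟩ then 1 else 0 := by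
    intro i; simp [eps, Fin.ext_iff]
  simp [h]

lemma sum_eps_mul {n p q : ℕ} (hp : p < n) :
    ∑ i : Fin n, eps (↑i) p * eps (↑i) q = eps p q := by
  by_cases h : p = q
  · subst h
    have h2 : ∀ i : Fin n, eps (↑i) p * eps (↑i) p = eps (↑i) p := by
      intro i; unfold eps; split_ifs <;> ring
    simp only [h2, sum_eps hp]
    simp [eps]
  · have h2 : ∀ i : Fin n, eps (↑i) p * eps (↑i) q = 0 := by
      intro i; unfold eps
      split_ifs with h1 h3
      · exfalso; omega
      all_goals ring
    simp only [h2]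
    simp [eps, h]

lemma dot {n : ℕ} (a b c d : ℝ) (p q : ℕ) (hp : p < n) (hq : q < n) :
    ∑ i : Fin n, (a + b * eps (↑i) p) * (c + d * eps (↑i) q)
      = a * c * n + (a * d + b * c) + b * d * eps p q := by
  have expand : ∀ i : Fin n, (a + b * eps (↑i) p) * (c + d * eps (↑i) q)
      = a*c + ((a*d) * eps (↑i) q + ((b*c) * eps (↑i) p + (b*d) * (eps (↑i) p * eps (↑i) q))) := by
    intro i; ring
  simp only [expand, Finset.sum_add_distrib, ← Finset.mul_sum, sum_eps hp, sum_eps hq,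
    sum_eps_mul hp, Finset.sum_const, Finset.card_univ, Fintype.card_fin, nsmul_eq_mul]
  ring

noncomputable def Ua : Fin 6 → ℝ := ![-1, 2, 0, 0, 0, 0]
noncomputable def Ub : Fin 6 → ℝ := ![2, -4, 2, 2, 2, 2]
def Upp : Fin 6 → ℕ := ![0, 0, 1, 2, 3, 4]
noncomputable def Va : Fin 6 → ℝ := ![1, 0, 0, 0, 0, 0]
noncomputable def Vb : Fin 6 → ℝ := ![0, 1, 1, 1, 1, 1]
def Vpp : Fin 6 → ℕ := ![0, 0, 2, 1, 4, 3]

noncomputable def Umat (n : ℕ) : Matrix (Fin n) (Fin 6) ℝ :=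
  Matrix.of fun i k => Ua k + Ub k * eps (↑i) (Upp k)

noncomputable def Vmat (n : ℕ) : Matrix (Fin n) (Fin 6) ℝ :=
  Matrix.of fun j k => Va k + Vb k * eps (↑j) (Vpp k)

set_option maxHeartbeats 1000000 in
lemma key1 (n : ℕ) (x : ℝ) :
    x • (1 : Matrix (Fin n) (Fin n) ℝ) - signMat n U2edge
      = (x + 1) • 1 + Umat n * (Vmat n)ᵀ := by
  ext i j
  have hij : (i = j) = ((i : ℕ) = (j : ℕ)) := by simp [Fin.ext_iff]
  simp only [Matrix.sub_apply, Matrix.add_apply, Matrix.smul_apply, Matrix.one_apply,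
    Matrix.mul_apply, Matrix.transpose_apply, signMat, Matrix.of_apply, Fin.sum_univ_succ,
    Fin.sum_univ_zero, Umat, Vmat, Ua, Ub, Upp, Va, Vb, Vpp, eps, smul_eq_mul, hij,
    Matrix.cons_val_zero, Matrix.cons_val_succ, Fin.succ_zero_eq_one]
  have hc : ∀ m : ℕ, m = 0 ∨ m = 1 ∨ m = 2 ∨ m = 3 ∨ m = 4 ∨ 5 ≤ m := fun m => by omega
  by_cases he : U2edge ((↑i:ℕ)+1) ((↑j:ℕ)+1)
  · rw [if_pos he]
    unfold U2edge adjPair at he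
    rcases hc (↑i) with hi|hi|hi|hi|hi|hi <;> rcases hc (↑j) with hj|hj|hj|hj|hj|hj
    · exfalso; omega
    · simp only [hi, hj]
      norm_num
      try ring
    · simp only [hi, hj]
      norm_num
      try ring
    · simp only [hi, hj]
      norm_num
      try ring
    · simp only [hi, hj]
      norm_num
      try ring
    · have n0 : ¬ ((↑j:ℕ) = 0) := by omega
      have n1 : ¬ ((↑j:ℕ) = 1) := by omega
      have n2 : ¬ ((↑j:ℕ) = 2) := by omega
      have n3 : ¬ ((↑j:ℕ) = 3) := by omega
      have n4 : ¬ ((↑j:ℕ) = 4) := by omega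
      have nd : ¬ ((0:ℕ) = (↑j:ℕ)) := by omega
      simp only [hi, n0, n1, n2, n3, n4, nd]
      norm_num
      try ring
    · simp only [hi, hj]
      norm_num
      try ring
    · exfalso; omega
    · simp only [hi, hj]
      norm_num
      try ring
    · exfalso; omega
    · exfalso; omega
    · exfalso; omega
    · simp only [hi, hj]
      norm_num
      try ring
    · simp only [hi, hj]
      norm_num
      try ring
    · exfalso; omega
    · exfalso; omega
    · exfalso; omega
    · exfalso; omega
    · simp only [hi, hj]
      norm_num
      try ring
    · exfalso; omega
    · exfalso; omega
    · exfalso; omega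
    · simp only [hi, hj]
      norm_num
      try ring
    · exfalso; omega
    · simp only [hi, hj]
      norm_num
      try ring
    · exfalso; omega
    · exfalso; omega
    · simp only [hi, hj]
      norm_num
      try ring
    · exfalso; omega
    · exfalso; omega
    · have n0 : ¬ ((↑i:ℕ) = 0) := by omega
      have n1 : ¬ ((↑i:ℕ) = 1) := by omega
      have n2 : ¬ ((↑i:ℕ) = 2) := by omega
      have n3 : ¬ ((↑i:ℕ) = 3) := by omega
      have n4 : ¬ ((↑i:ℕ) = 4) := by omega
      have nd : ¬ ((↑i:ℕ) = (0:ℕ)) := by omega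
      simp only [hj, n0, n1, n2, n3, n4, nd]
      norm_num
      try ring
    · exfalso; omega
    · exfalso; omega
    · exfalso; omega
    · exfalso; omega
    · exfalso; omega
  · rw [if_neg he]
    unfold U2edge adjPair at he
    rcases hc (↑i) with hi|hi|hi|hi|hi|hi <;> rcases hc (↑j) with hj|hj|hj|hj|hj|hj
    · simp only [hi, hj]
      norm_num
      try ring
    · exfalso; omega
    · exfalso; omega
    · exfalso; omega
    · exfalso; omega
    · exfalso; omega
    · exfalso; omega
    · simp only [hi, hj]
      norm_num
      try ring
    · exfalso; omega
    · simp only [hi, hj]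
      norm_num
      try ring
    · simp only [hi, hj]
      norm_num
      try ring
    · have n0 : ¬ ((↑j:ℕ) = 0) := by omega
      have n1 : ¬ ((↑j:ℕ) = 1) := by omega
      have n2 : ¬ ((↑j:ℕ) = 2) := by omega
      have n3 : ¬ ((↑j:ℕ) = 3) := by omega
      have n4 : ¬ ((↑j:ℕ) = 4) := by omega
      have nd : ¬ ((1:ℕ) = (↑j:ℕ)) := by omega
      simp only [hi, n0, n1, n2, n3, n4, nd]
      norm_num
      try ring
    · exfalso; omega
    · exfalso; omega
    · simp only [hi, hj]
      norm_num
      try ring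
    · simp only [hi, hj]
      norm_num
      try ring
    · simp only [hi, hj]
      norm_num
      try ring
    · have n0 : ¬ ((↑j:ℕ) = 0) := by omega
      have n1 : ¬ ((↑j:ℕ) = 1) := by omega
      have n2 : ¬ ((↑j:ℕ) = 2) := by omega
      have n3 : ¬ ((↑j:ℕ) = 3) := by omega
      have n4 : ¬ ((↑j:ℕ) = 4) := by omega
      have nd : ¬ ((2:ℕ) = (↑j:ℕ)) := by omega
      simp only [hi, n0, n1, n2, n3, n4, nd]
      norm_num
      try ring
    · exfalso; omega
    · simp only [hi, hj]
      norm_num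
      try ring
    · simp only [hi, hj]
      norm_num
      try ring
    · simp only [hi, hj]
      norm_num
      try ring
    · exfalso; omega
    · have n0 : ¬ ((↑j:ℕ) = 0) := by omega
      have n1 : ¬ ((↑j:ℕ) = 1) := by omega
      have n2 : ¬ ((↑j:ℕ) = 2) := by omega
      have n3 : ¬ ((↑j:ℕ) = 3) := by omega
      have n4 : ¬ ((↑j:ℕ) = 4) := by omega
      have nd : ¬ ((3:ℕ) = (↑j:ℕ)) := by omega
      simp only [hi, n0, n1, n2, n3, n4, nd]
      norm_num
      try ring
    · exfalso; omega
    · simp only [hi, hj]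
      norm_num
      try ring
    · simp only [hi, hj]
      norm_num
      try ring
    · exfalso; omega
    · simp only [hi, hj]
      norm_num
      try ring
    · have n0 : ¬ ((↑j:ℕ) = 0) := by omega
      have n1 : ¬ ((↑j:ℕ) = 1) := by omega
      have n2 : ¬ ((↑j:ℕ) = 2) := by omega
      have n3 : ¬ ((↑j:ℕ) = 3) := by omega
      have n4 : ¬ ((↑j:ℕ) = 4) := by omega
      have nd : ¬ ((4:ℕ) = (↑j:ℕ)) := by omega
      simp only [hi, n0, n1, n2, n3, n4, nd]
      norm_num
      try ring
    · exfalso; omega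
    · have n0 : ¬ ((↑i:ℕ) = 0) := by omega
      have n1 : ¬ ((↑i:ℕ) = 1) := by omega
      have n2 : ¬ ((↑i:ℕ) = 2) := by omega
      have n3 : ¬ ((↑i:ℕ) = 3) := by omega
      have n4 : ¬ ((↑i:ℕ) = 4) := by omega
      have nd : ¬ ((↑i:ℕ) = (1:ℕ)) := by omega
      simp only [hj, n0, n1, n2, n3, n4, nd]
      norm_num
      try ring
    · have n0 : ¬ ((↑i:ℕ) = 0) := by omega
      have n1 : ¬ ((↑i:ℕ) = 1) := by omega
      have n2 : ¬ ((↑i:ℕ) = 2) := by omega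
      have n3 : ¬ ((↑i:ℕ) = 3) := by omega
      have n4 : ¬ ((↑i:ℕ) = 4) := by omega
      have nd : ¬ ((↑i:ℕ) = (2:ℕ)) := by omega
      simp only [hj, n0, n1, n2, n3, n4, nd]
      norm_num
      try ring
    · have n0 : ¬ ((↑i:ℕ) = 0) := by omega
      have n1 : ¬ ((↑i:ℕ) = 1) := by omega
      have n2 : ¬ ((↑i:ℕ) = 2) := by omega
      have n3 : ¬ ((↑i:ℕ) = 3) := by omega
      have n4 : ¬ ((↑i:ℕ) = 4) := by omega
      have nd : ¬ ((↑i:ℕ) = (3:ℕ)) := by omega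
      simp only [hj, n0, n1, n2, n3, n4, nd]
      norm_num
      try ring
    · have n0 : ¬ ((↑i:ℕ) = 0) := by omega
      have n1 : ¬ ((↑i:ℕ) = 1) := by omega
      have n2 : ¬ ((↑i:ℕ) = 2) := by omega
      have n3 : ¬ ((↑i:ℕ) = 3) := by omega
      have n4 : ¬ ((↑i:ℕ) = 4) := by omega
      have nd : ¬ ((↑i:ℕ) = (4:ℕ)) := by omega
      simp only [hj, n0, n1, n2, n3, n4, nd]
      norm_num
      try ring
    · have n0 : ¬ ((↑i:ℕ) = 0) := by omega
      have n1 : ¬ ((↑i:ℕ) = 1) := by omega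
      have n2 : ¬ ((↑i:ℕ) = 2) := by omega
      have n3 : ¬ ((↑i:ℕ) = 3) := by omega
      have n4 : ¬ ((↑i:ℕ) = 4) := by omega
      have m0 : ¬ ((↑j:ℕ) = 0) := by omega
      have m1 : ¬ ((↑j:ℕ) = 1) := by omega
      have m2 : ¬ ((↑j:ℕ) = 2) := by omega
      have m3 : ¬ ((↑j:ℕ) = 3) := by omega
      have m4 : ¬ ((↑j:ℕ) = 4) := by omega
      simp only [n0, n1, n2, n3, n4, m0, m1, m2, m3, m4]
      by_cases hd : ((↑i:ℕ) = (↑j:ℕ)) <;> simp only [hd] <;> norm_num <;> try ring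

section
variable {α : Type*}
lemma v6m0 (a0 a1 a2 a3 a4 a5 : α) (h : 0 < 6) : ![a0,a1,a2,a3,a4,a5] ⟨0,h⟩ = a0 := rfl
lemma v6m1 (a0 a1 a2 a3 a4 a5 : α) (h : 1 < 6) : ![a0,a1,a2,a3,a4,a5] ⟨1,h⟩ = a1 := rfl
lemma v6m2 (a0 a1 a2 a3 a4 a5 : α) (h : 2 < 6) : ![a0,a1,a2,a3,a4,a5] ⟨2,h⟩ = a2 := rfl
lemma v6m3 (a0 a1 a2 a3 a4 a5 : α) (h : 3 < 6) : ![a0,a1,a2,a3,a4,a5] ⟨3,h⟩ = a3 := rfl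
lemma v6m4 (a0 a1 a2 a3 a4 a5 : α) (h : 4 < 6) : ![a0,a1,a2,a3,a4,a5] ⟨4,h⟩ = a4 := rfl
lemma v6m5 (a0 a1 a2 a3 a4 a5 : α) (h : 5 < 6) : ![a0,a1,a2,a3,a4,a5] ⟨5,h⟩ = a5 := rfl
end

noncomputable def Wc (n : ℕ) (x : ℝ) : Matrix (Fin 6) (Fin 6) ℝ :=
  !![x+3-(n:ℝ), 2*(n:ℝ)-4, 2, 2, 2, 2;
     1, x-1, 0, 0, 0, 0;
     -1, 2, x+1, 2, 0, 0;
     -1, 2, 2, x+1, 0, 0;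
     -1, 2, 0, 0, x+1, 2;
     -1, 2, 0, 0, 2, x+1]

noncomputable def Gm : Matrix (Fin 6) (Fin 6) ℝ :=
  !![2,0,0,0,1,0; 1,0,0,0,0,0; 0,-1,0,-1,0,1; 0,1,0,-1,0,0; 0,0,-1,1,0,0; 0,0,1,1,0,0]

noncomputable def Gminv : Matrix (Fin 6) (Fin 6) ℝ :=
  !![0,1,0,0,0,0; 0,0,0,1,1/2,1/2; 0,0,0,0,-1/2,1/2; 0,0,0,0,1/2,1/2; 1,-2,0,0,0,0; 0,0,1,1,1,1]

noncomputable def Tc (n : ℕ) (x : ℝ) : Matrix (Fin 6) (Fin 6) ℝ :=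
  !![x+1,0,0,0,1,0; 0,x-1,0,0,-2,2; 0,0,x-1,0,0,0; 0,0,0,x+3,-1,0;
     0,0,0,0,x+1-(n:ℝ),2; 0,0,0,0,-4,x+3]

noncomputable def Tc5 (n : ℕ) (x : ℝ) : Matrix (Fin 5) (Fin 5) ℝ :=
  !![x-1,0,0,-2,2; 0,x-1,0,0,0; 0,0,x+3,-1,0; 0,0,0,x+1-(n:ℝ),2; 0,0,0,-4,x+3]

noncomputable def Tc4 (n : ℕ) (x : ℝ) : Matrix (Fin 4) (Fin 4) ℝ :=
  !![x-1,0,0,0; 0,x+3,-1,0; 0,0,x+1-(n:ℝ),2; 0,0,-4,x+3]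

noncomputable def Tc3 (n : ℕ) (x : ℝ) : Matrix (Fin 3) (Fin 3) ℝ :=
  !![x+3,-1,0; 0,x+1-(n:ℝ),2; 0,-4,x+3]

lemma hGG : Gm * Gminv = 1 := by
  ext i j
  fin_cases i <;> fin_cases j <;>
    norm_num [Gm, Gminv, Matrix.mul_apply, Fin.sum_univ_succ, Matrix.one_apply, Fin.ext_iff,
      v6m0, v6m1, v6m2, v6m3, v6m4, v6m5]

lemma hGdetne : Gm.det ≠ 0 := by
  intro h
  have h2 : Gm.det * Gminv.det = 1 := by
    rw [← Matrix.det_mul, hGG, Matrix.det_one]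
  rw [h, zero_mul] at h2
  exact zero_ne_one h2

lemma hGT (n : ℕ) (x : ℝ) : Wc n x * Gm = Gm * Tc n x := by
  ext i j
  fin_cases i <;> fin_cases j <;>
    (simp only [Wc, Gm, Tc, Matrix.mul_apply, Fin.sum_univ_succ, Fin.sum_univ_zero,
      Matrix.of_apply, Matrix.cons_val_zero, Matrix.cons_val_succ,
      v6m0, v6m1, v6m2, v6m3, v6m4, v6m5]; ring)

lemma sub1 (n : ℕ) (x : ℝ) :
    (Tc n x).submatrix (Fin.succAbove 0) Fin.succ = Tc5 n x := by
  ext i j; fin_cases i <;> fin_cases j <;> rfl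

lemma sub2 (n : ℕ) (x : ℝ) :
    (Tc5 n x).submatrix (Fin.succAbove 0) Fin.succ = Tc4 n x := by
  ext i j; fin_cases i <;> fin_cases j <;> rfl

lemma sub3 (n : ℕ) (x : ℝ) :
    (Tc4 n x).submatrix (Fin.succAbove 0) Fin.succ = Tc3 n x := by
  ext i j; fin_cases i <;> fin_cases j <;> rfl

lemma hTdet (n : ℕ) (x : ℝ) :
    (Tc n x).det = (x+1) * (x-1)^2 * (x+3) * (x^2 + (4-(n:ℝ))*x + 11 - 3*(n:ℝ)) := by
  have e5 : (Tc3 n x).det = (x+3) * ((x+1-(n:ℝ))*(x+3) + 8) := by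
    rw [Matrix.det_fin_three]
    norm_num [Tc3, Matrix.cons_val_zero, Matrix.cons_val_one, Matrix.head_cons, Matrix.vecHead, Matrix.vecTail,
      Matrix.cons_val_two, Matrix.tail_cons]
    ring
  have e4 : (Tc4 n x).det = (x-1) * (Tc3 n x).det := by
    rw [Matrix.det_succ_column_zero, Fin.sum_univ_four, sub3 n x]
    show (-1)^(0:ℕ) * (x-1) * _ + (-1)^(1:ℕ) * 0 * _ + (-1)^(2:ℕ) * 0 * _
        + (-1)^(3:ℕ) * 0 * _ = _
    ring
  have e3 : (Tc5 n x).det = (x-1) * (Tc4 n x).det := by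
    rw [Matrix.det_succ_column_zero, Fin.sum_univ_five, sub2 n x]
    show (-1)^(0:ℕ) * (x-1) * _ + (-1)^(1:ℕ) * 0 * _ + (-1)^(2:ℕ) * 0 * _
        + (-1)^(3:ℕ) * 0 * _ + (-1)^(4:ℕ) * 0 * _ = _
    ring
  have e2 : (Tc n x).det = (x+1) * (Tc5 n x).det := by
    rw [Matrix.det_succ_column_zero, Fin.sum_univ_six, sub1 n x]
    show (-1)^(0:ℕ) * (x+1) * _ + (-1)^(1:ℕ) * 0 * _ + (-1)^(2:ℕ) * 0 * _
        + (-1)^(3:ℕ) * 0 * _ + (-1)^(4:ℕ) * 0 * _ + (-1)^(5:ℕ) * 0 * _ = _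
    ring
  rw [e2, e3, e4, e5]
  ring

lemma hWdet (n : ℕ) (x : ℝ) :
    (Wc n x).det = (x+1) * (x-1)^2 * (x+3) * (x^2 + (4-(n:ℝ))*x + 11 - 3*(n:ℝ)) := by
  have h2 : (Wc n x).det * Gm.det = Gm.det * (Tc n x).det := by
    rw [← Matrix.det_mul, ← Matrix.det_mul, hGT]
  rw [mul_comm] at h2
  have h3 := mul_left_cancel₀ hGdetne h2
  rw [h3, hTdet]

lemma key23 (n : ℕ) (hn : 6 ≤ n) (x : ℝ) :
    (x + 1) • (1 : Matrix (Fin 6) (Fin 6) ℝ) + (Vmat n)ᵀ * Umat n = Wc n x := by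
  have hV : ∀ k : Fin 6, Vpp k < 6 := by decide
  have hU : ∀ k : Fin 6, Upp k < 6 := by decide
  ext k l
  rw [Matrix.add_apply, Matrix.smul_apply, Matrix.mul_apply]
  rw [show ∑ i : Fin n, (Vmat n)ᵀ k i * Umat n i l
      = Va k * Ua l * n + (Va k * Ub l + Vb k * Ua l) + Vb k * Ub l * eps (Vpp k) (Upp l) from
    dot (Va k) (Vb k) (Ua l) (Ub l) (Vpp k) (Upp l)
      (lt_of_lt_of_le (hV k) hn) (lt_of_lt_of_le (hU l) hn)]
  fin_cases k <;> fin_cases l <;>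
    norm_num [Va, Vb, Ua, Ub, Vpp, Upp, eps, Wc, Matrix.one_apply, smul_eq_mul,
      v6m0, v6m1, v6m2, v6m3, v6m4, v6m5, Fin.ext_iff] <;> ring


end U2aux

/-- for `n ≥ 6`,
`det(λI − A(K_n,U₂⁻)) = (λ+1)^{n−5} (λ−1)² (λ+3) (λ² + (4−n)λ + 11 − 3n)`. -/
theorem stmt2 (n : ℕ) (hn : 6 ≤ n) (x : ℝ) :
    (x • (1 : Matrix (Fin n) (Fin n) ℝ) - signMat n U2edge).det =
      (x + 1) ^ (n - 5) * (x - 1) ^ 2 * (x + 3) *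
        (x ^ 2 + (4 - (n : ℝ)) * x + 11 - 3 * (n : ℝ)) := by
  open U2aux in
  have main : ∀ y : ℝ, y + 1 ≠ 0 →
      (y • (1 : Matrix (Fin n) (Fin n) ℝ) - signMat n U2edge).det =
      (y + 1) ^ (n - 5) * (y - 1) ^ 2 * (y + 3) *
        (y ^ 2 + (4 - (n : ℝ)) * y + 11 - 3 * (n : ℝ)) := by
    intro y hc
    rw [key1 n y]
    have h1 : (y + 1) • (1 : Matrix (Fin n) (Fin n) ℝ) + Umat n * (Vmat n)ᵀ
        = (y + 1) • (1 + ((y + 1)⁻¹ • Umat n) * (Vmat n)ᵀ) := by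
      rw [Matrix.smul_mul, smul_add, smul_smul, mul_inv_cancel₀ hc, one_smul]
    rw [h1, Matrix.det_smul, Matrix.det_one_add_mul_comm, Matrix.mul_smul, Fintype.card_fin]
    have h2 : (1 : Matrix (Fin 6) (Fin 6) ℝ) + (y + 1)⁻¹ • ((Vmat n)ᵀ * Umat n)
        = (y + 1)⁻¹ • (Wc n y) := by
      rw [← key23 n hn y, smul_add, smul_smul, inv_mul_cancel₀ hc, one_smul]
    rw [h2, Matrix.det_smul, Fintype.card_fin, hWdet]
    have hp : (y + 1) ^ n * ((y + 1)⁻¹) ^ 6 * (y + 1) = (y + 1) ^ (n - 5) := by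
      rw [inv_pow]
      field_simp
      rw [← pow_add]
      congr 1
      omega
    rw [← hp]
    ring
  have hfc : Continuous fun y : ℝ =>
      (y • (1 : Matrix (Fin n) (Fin n) ℝ) - signMat n U2edge).det := by
    apply Continuous.matrix_det
    exact (continuous_id.smul continuous_const).sub continuous_const
  have hgc : Continuous fun y : ℝ =>
      (y + 1) ^ (n - 5) * (y - 1) ^ 2 * (y + 3) *
        (y ^ 2 + (4 - (n : ℝ)) * y + 11 - 3 * (n : ℝ)) := by fun_prop
  have hd : Dense ({(-1 : ℝ)}ᶜ : Set ℝ) := dense_compl_singleton _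
  have heq := Continuous.ext_on hd hfc hgc (fun y hy => by
    have hy' : y ≠ -1 := hy
    exact main y (fun h => hy' (by linarith)))
  exact congrFun heq x
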